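/- Define the derivation ∂ on the noncommutative polynomial algebra Q⟨z_k : k≥1⟩ by ∂(z_{k_1}⋯z_{k_d}) = ∑_{a=1}^{d} k_a · z_{k_1}⋯z_{k_a+1}⋯z_{k_d} (extended linearly, with ∂(1)=0). Then ∂ is a derivation with respect to the stuffle product *, i.e., ∂(u * v) = ∂(u) * v + u * ∂(v) for all u, v. -/

import Mathlib

/-- The stuffle (harmonic) product on words in letters `z_k`, valued in formal
`ℚ`-linear combinations of words. -/
noncomputable def stuffle : List ℕ → List ℕ → (List ℕ →₀ ℚ)
  | [], v => Finsupp.single v 1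
  | u, [] => Finsupp.single u 1
  | i :: u, j :: v =>
      Finsupp.mapDomain (List.cons i) (stuffle u (j :: v)) +
      Finsupp.mapDomain (List.cons j) (stuffle (i :: u) v) +
      Finsupp.mapDomain (List.cons (i + j)) (stuffle u v)
  termination_by u v => u.length + v.length
  decreasing_by all_goals simp [List.length_cons] <;> omega

/-- Bilinear extension of the stuffle product to formal sums of words. -/
noncomputable def stuffleL (f g : List ℕ →₀ ℚ) : List ℕ →₀ ℚ :=
  f.sum fun u a => g.sum fun v b => (a * b) • stuffle u v

/-- The map `∂` on words: `∂(z_{k₁}⋯z_{k_d}) = ∑_a k_a z_{k₁}⋯z_{k_a+1}⋯z_{k_d}`. -/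
noncomputable def der : List ℕ → (List ℕ →₀ ℚ)
  | [] => 0
  | k :: ks =>
      (k : ℚ) • Finsupp.single ((k + 1) :: ks) 1 +
      Finsupp.mapDomain (List.cons k) (der ks)

/-- Linear extension of `∂` to formal sums of words. -/
noncomputable def derL (f : List ℕ →₀ ℚ) : List ℕ →₀ ℚ :=
  f.sum fun w c => c • der w

lemma stuffle_nil_left (v : List ℕ) : stuffle [] v = Finsupp.single v 1 := by
  cases v <;> rw [stuffle]

lemma stuffle_nil_right (u : List ℕ) : stuffle u [] = Finsupp.single u 1 := by
  cases u with
  | nil => rw [stuffle]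
  | cons i u => rw [stuffle]; simp

lemma stuffle_cons (i j : ℕ) (u v : List ℕ) :
    stuffle (i :: u) (j :: v) =
      Finsupp.mapDomain (List.cons i) (stuffle u (j :: v)) +
      Finsupp.mapDomain (List.cons j) (stuffle (i :: u) v) +
      Finsupp.mapDomain (List.cons (i + j)) (stuffle u v) := by
  rw [stuffle]

lemma stuffleL_single_right (f : List ℕ →₀ ℚ) (v : List ℕ) :
    stuffleL f (Finsupp.single v 1) = f.sum fun u a => a • stuffle u v := by
  unfold stuffleL
  refine Finsupp.sum_congr fun u _ => ?_
  rw [Finsupp.sum_single_index (by simp)]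
  simp

lemma stuffleL_single_left (g : List ℕ →₀ ℚ) (u : List ℕ) :
    stuffleL (Finsupp.single u 1) g = g.sum fun v b => b • stuffle u v := by
  unfold stuffleL
  rw [Finsupp.sum_single_index (by simp)]
  simp

lemma stuffleL_single_single (u v : List ℕ) :
    stuffleL (Finsupp.single u 1) (Finsupp.single v 1) = stuffle u v := by
  rw [stuffleL_single_left, Finsupp.sum_single_index (by simp), one_smul]

lemma derL_single (w : List ℕ) (c : ℚ) : derL (Finsupp.single w c) = c • der w := by
  unfold derL
  rw [Finsupp.sum_single_index (by simp)]

lemma derL_add (f g : List ℕ →₀ ℚ) : derL (f + g) = derL f + derL g := by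
  unfold derL
  rw [Finsupp.sum_add_index' (by simp) (by intros; rw [add_smul])]

lemma derL_smul (c : ℚ) (f : List ℕ →₀ ℚ) : derL (c • f) = c • derL f := by
  unfold derL
  rw [Finsupp.sum_smul_index (by simp), Finsupp.smul_sum]
  simp [mul_smul]

lemma derL_mapDomain (k : ℕ) (f : List ℕ →₀ ℚ) :
    derL (Finsupp.mapDomain (List.cons k) f) =
      (k : ℚ) • Finsupp.mapDomain (List.cons (k + 1)) f +
      Finsupp.mapDomain (List.cons k) (derL f) := by
  unfold derL
  rw [Finsupp.sum_mapDomain_index (by simp) (by intros; rw [add_smul])]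
  have h1 : ∀ w : List ℕ, ∀ c : ℚ, c • der (k :: w) =
      (k : ℚ) • Finsupp.single ((k+1) :: w) c +
        Finsupp.mapDomain (List.cons k) (c • der w) := by
    intro w c
    simp [der, smul_add, Finsupp.mapDomain_smul, smul_smul, Finsupp.smul_single, mul_comm]
  have h2 : (f.sum fun w c => c • der (k :: w)) =
      f.sum fun w c => ((k : ℚ) • Finsupp.single ((k+1) :: w) c +
        Finsupp.mapDomain (List.cons k) (c • der w)) :=
    Finsupp.sum_congr (fun w _ => h1 w (f w))
  rw [h2, Finsupp.sum_add]
  congr 1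
  · rw [Finsupp.mapDomain, Finsupp.smul_sum]
  · rw [Finsupp.mapDomain_sum]

lemma stuffleL_zero_left (g : List ℕ →₀ ℚ) : stuffleL 0 g = 0 := by
  simp [stuffleL]

lemma stuffleL_zero_right (f : List ℕ →₀ ℚ) : stuffleL f 0 = 0 := by
  simp [stuffleL]

lemma stuffleL_add_left (f₁ f₂ g : List ℕ →₀ ℚ) :
    stuffleL (f₁ + f₂) g = stuffleL f₁ g + stuffleL f₂ g := by
  unfold stuffleL
  rw [Finsupp.sum_add_index' (by simp) ?_]
  intro u a₁ a₂
  rw [← Finsupp.sum_add]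
  congr 1
  ext v b
  rw [add_mul, add_smul]

lemma stuffleL_add_right (f g₁ g₂ : List ℕ →₀ ℚ) :
    stuffleL f (g₁ + g₂) = stuffleL f g₁ + stuffleL f g₂ := by
  unfold stuffleL
  rw [← Finsupp.sum_add]
  refine Finsupp.sum_congr fun u _ => ?_
  rw [Finsupp.sum_add_index' (by simp) (by intro v b₁ b₂; rw [mul_add, add_smul])]

lemma stuffleL_smul_left (c : ℚ) (f g : List ℕ →₀ ℚ) :
    stuffleL (c • f) g = c • stuffleL f g := by
  unfold stuffleL
  rw [Finsupp.sum_smul_index (by simp), Finsupp.smul_sum]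
  refine Finsupp.sum_congr fun u _ => ?_
  rw [Finsupp.smul_sum]
  refine Finsupp.sum_congr fun v _ => ?_
  rw [smul_smul, mul_assoc]

lemma stuffleL_smul_right (c : ℚ) (f g : List ℕ →₀ ℚ) :
    stuffleL f (c • g) = c • stuffleL f g := by
  unfold stuffleL
  rw [Finsupp.smul_sum]
  refine Finsupp.sum_congr fun u _ => ?_
  rw [Finsupp.sum_smul_index (by simp), Finsupp.smul_sum]
  refine Finsupp.sum_congr fun v _ => ?_
  rw [smul_smul, mul_left_comm]

lemma stuffleL_mapDomain_left (i j : ℕ) (f : List ℕ →₀ ℚ) (v : List ℕ) :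
    stuffleL (Finsupp.mapDomain (List.cons i) f) (Finsupp.single (j :: v) 1) =
      Finsupp.mapDomain (List.cons i) (stuffleL f (Finsupp.single (j :: v) 1)) +
      Finsupp.mapDomain (List.cons j)
        (stuffleL (Finsupp.mapDomain (List.cons i) f) (Finsupp.single v 1)) +
      Finsupp.mapDomain (List.cons (i + j)) (stuffleL f (Finsupp.single v 1)) := by
  rw [stuffleL_single_right, stuffleL_single_right, stuffleL_single_right,
    stuffleL_single_right,
    Finsupp.sum_mapDomain_index (by simp) (by intros; rw [add_smul]),
    Finsupp.sum_mapDomain_index (by simp) (by intros; rw [add_smul])]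
  have h1 : ∀ w : List ℕ, ∀ c : ℚ, c • stuffle (i :: w) (j :: v) =
      Finsupp.mapDomain (List.cons i) (c • stuffle w (j :: v)) +
      Finsupp.mapDomain (List.cons j) (c • stuffle (i :: w) v) +
      Finsupp.mapDomain (List.cons (i + j)) (c • stuffle w v) := by
    intro w c
    rw [stuffle_cons]
    simp [smul_add, Finsupp.mapDomain_smul]
  have h2 : (f.sum fun w c => c • stuffle (i :: w) (j :: v)) = f.sum fun w c =>
      (Finsupp.mapDomain (List.cons i) (c • stuffle w (j :: v)) +
      Finsupp.mapDomain (List.cons j) (c • stuffle (i :: w) v) +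
      Finsupp.mapDomain (List.cons (i + j)) (c • stuffle w v)) :=
    Finsupp.sum_congr fun w _ => h1 w (f w)
  rw [h2, Finsupp.sum_add, Finsupp.sum_add, Finsupp.mapDomain_sum,
    Finsupp.mapDomain_sum, Finsupp.mapDomain_sum]

lemma stuffleL_mapDomain_right (i j : ℕ) (u : List ℕ) (g : List ℕ →₀ ℚ) :
    stuffleL (Finsupp.single (i :: u) 1) (Finsupp.mapDomain (List.cons j) g) =
      Finsupp.mapDomain (List.cons i)
        (stuffleL (Finsupp.single u 1) (Finsupp.mapDomain (List.cons j) g)) +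
      Finsupp.mapDomain (List.cons j) (stuffleL (Finsupp.single (i :: u) 1) g) +
      Finsupp.mapDomain (List.cons (i + j)) (stuffleL (Finsupp.single u 1) g) := by
  rw [stuffleL_single_left, stuffleL_single_left, stuffleL_single_left,
    stuffleL_single_left,
    Finsupp.sum_mapDomain_index (by simp) (by intros; rw [add_smul]),
    Finsupp.sum_mapDomain_index (by simp) (by intros; rw [add_smul])]
  have h1 : ∀ w : List ℕ, ∀ c : ℚ, c • stuffle (i :: u) (j :: w) =
      Finsupp.mapDomain (List.cons i) (c • stuffle u (j :: w)) +
      Finsupp.mapDomain (List.cons j) (c • stuffle (i :: u) w) +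
      Finsupp.mapDomain (List.cons (i + j)) (c • stuffle u w) := by
    intro w c
    rw [stuffle_cons]
    simp [smul_add, Finsupp.mapDomain_smul]
  have h2 : (g.sum fun w c => c • stuffle (i :: u) (j :: w)) = g.sum fun w c =>
      (Finsupp.mapDomain (List.cons i) (c • stuffle u (j :: w)) +
      Finsupp.mapDomain (List.cons j) (c • stuffle (i :: u) w) +
      Finsupp.mapDomain (List.cons (i + j)) (c • stuffle u w)) :=
    Finsupp.sum_congr fun w _ => h1 w (g w)
  rw [h2, Finsupp.sum_add, Finsupp.sum_add, Finsupp.mapDomain_sum,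
    Finsupp.mapDomain_sum, Finsupp.mapDomain_sum]

lemma key : ∀ u v : List ℕ, derL (stuffle u v) =
    stuffleL (der u) (Finsupp.single v 1) + stuffleL (Finsupp.single u 1) (der v)
  | [], v => by
    rw [stuffle_nil_left, derL_single, one_smul,
      show der [] = 0 from rfl, stuffleL_zero_left, zero_add, stuffleL_single_left]
    simp [stuffle_nil_left, Finsupp.smul_single, Finsupp.sum_single]
  | i :: u, [] => by
    rw [stuffle_nil_right, derL_single, one_smul,
      show der [] = 0 from rfl, stuffleL_zero_right, add_zero, stuffleL_single_right]
    simp [stuffle_nil_right, Finsupp.smul_single, Finsupp.sum_single]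
  | i :: u, j :: v => by
    have hij : i + 1 + j = i + j + 1 := by omega
    have hij2 : i + (j + 1) = i + j + 1 := rfl
    rw [stuffle_cons, derL_add, derL_add, derL_mapDomain, derL_mapDomain, derL_mapDomain,
      key u (j :: v), key (i :: u) v, key u v,
      show der (i :: u) = (i : ℚ) • Finsupp.single ((i+1) :: u) 1 +
        Finsupp.mapDomain (List.cons i) (der u) from by rw [der],
      show der (j :: v) = (j : ℚ) • Finsupp.single ((j+1) :: v) 1 +
        Finsupp.mapDomain (List.cons j) (der v) from by rw [der]]
    simp only [stuffleL_add_left, stuffleL_add_right, stuffleL_smul_left, stuffleL_smul_right,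
      stuffleL_single_single, stuffleL_mapDomain_left, stuffleL_mapDomain_right,
      stuffle_cons, Finsupp.mapDomain_add, Finsupp.mapDomain_smul, smul_add,
      Nat.cast_add, add_smul, hij, hij2]
    abel
  termination_by u v => u.length + v.length

lemma derL_zero : derL 0 = 0 := by simp [derL]


/-- `∂` is a derivation with respect to the stuffle product:
`∂(u * v) = ∂(u) * v + u * ∂(v)`. -/
theorem der_is_stuffle_derivation (f g : List ℕ →₀ ℚ) :
    derL (stuffleL f g) = stuffleL (derL f) g + stuffleL f (derL g) := by
  induction f using Finsupp.induction_linear with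
  | zero => simp [stuffleL_zero_left, derL_zero]
  | add f₁ f₂ h₁ h₂ =>
    rw [stuffleL_add_left, derL_add, derL_add, h₁, h₂, stuffleL_add_left, stuffleL_add_left]
    abel
  | single u a =>
    induction g using Finsupp.induction_linear with
    | zero => simp [stuffleL_zero_right, derL_zero]
    | add g₁ g₂ h₁ h₂ =>
      rw [stuffleL_add_right, derL_add, derL_add, h₁, h₂, stuffleL_add_right,
        stuffleL_add_right]
      abel
    | single v b =>
      have e1 : (Finsupp.single u a : List ℕ →₀ ℚ) = a • Finsupp.single u 1 := by
        rw [Finsupp.smul_single, smul_eq_mul, mul_one]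
      have e2 : (Finsupp.single v b : List ℕ →₀ ℚ) = b • Finsupp.single v 1 := by
        rw [Finsupp.smul_single, smul_eq_mul, mul_one]
      simp only [e1, e2, stuffleL_smul_left, stuffleL_smul_right, derL_smul,
        derL_single, one_smul, stuffleL_single_single, key u v, smul_add]
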